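/- arXiv:2302.01797 — 2 statements merged into one kernel-verified Lean document; each statement's English description precedes it below -/
import Mathlib

section
/- Let A and B be symmetric invertible 3×3 matrices with det A = det B, suppose R·B − A = a ⊗ n for some R ∈ SO(3), a ∈ ℝ³, n ∈ ℝ³ with n ≠ 0, and suppose A·p_A = α·p_A and B·p_B = α·p_B for some α ∈ ℝ, α ≠ 0 and vectors p_A, p_B. Then (R·p_B − p_A) · (A⁻¹n) = 0 if and only if (p_B − p_A) · n = 0. -/
open Matrix

noncomputable section

abbrev M3 := Matrix (Fin 3) (Fin 3) ℝ
abbrev V3 := Fin 3 → ℝ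

def IsRot (R : M3) : Prop := Rᵀ * R = 1 ∧ R.det = 1

lemma vecMulVec_mulVec' (a n x : V3) :
    vecMulVec a n *ᵥ x = (n ⬝ᵥ x) • a := by
  funext i
  simp [vecMulVec_apply, mulVec, dotProduct, Finset.mul_sum, mul_comm, mul_left_comm]

/-- Lemma 6.1 of James–Kinderlehrer. -/
theorem pole_free_interface_equivalence
    (A B : M3) (hAsymm : Aᵀ = A) (hBsymm : Bᵀ = B)
    (hA : IsUnit A.det) (hB : IsUnit B.det) (hdet : A.det = B.det)
    (R : M3) (a n : V3) (hR : IsRot R) (hn : n ≠ 0)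
    (htwin : R * B - A = vecMulVec a n)
    (α : ℝ) (hα : α ≠ 0) (pA pB : V3)
    (hpA : A *ᵥ pA = α • pA) (hpB : B *ᵥ pB = α • pB) :
    (R *ᵥ pB - pA) ⬝ᵥ (A⁻¹ *ᵥ n) = 0 ↔ (pB - pA) ⬝ᵥ n = 0 := by
  have hRB : R * B = A + vecMulVec a n := sub_eq_iff_eq_add'.mp htwin
  -- A⁻¹ is symmetric
  have hAinvsymm : (A⁻¹)ᵀ = A⁻¹ := by
    rw [transpose_nonsing_inv, hAsymm]
  have hAinvA : A⁻¹ * A = 1 := nonsing_inv_mul A hA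
  -- determinant computation : key = n ⬝ᵥ A⁻¹ *ᵥ a = 0
  have hdetRB : (R * B).det = A.det := by
    rw [det_mul, hR.2, one_mul, hdet]
  have key : n ⬝ᵥ (A⁻¹ *ᵥ a) = 0 := by
    have h1 : (A + vecMulVec a n).det = A.det * (1 + n ⬝ᵥ (A⁻¹ *ᵥ a)) := by
      rw [vecMulVec_eq Unit, det_add_replicateCol_mul_replicateRow hA]
      congr 1
      rw [Matrix.mul_assoc, det_unique]
      simp [Matrix.mul_apply, Matrix.vecMul, Matrix.mulVec, dotProduct, Finset.mul_sum,
        Fin.sum_univ_three]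
    have h2 : A.det * (1 + n ⬝ᵥ (A⁻¹ *ᵥ a)) = A.det := by
      rw [← h1, ← hRB, hdetRB]
    have h3 : (1 : ℝ) + n ⬝ᵥ (A⁻¹ *ᵥ a) = 1 :=
      mul_left_cancel₀ hA.ne_zero (h2.trans (mul_one A.det).symm)
    linarith
  -- eigenvector facts under A⁻¹
  have hAinvpA : α • (A⁻¹ *ᵥ pA) = pA := by
    have := congrArg (fun v => A⁻¹ *ᵥ v) hpA
    simpa [mulVec_mulVec, hAinvA, mulVec_smul] using this.symm
  have hRpB : α • (R *ᵥ pB) = A *ᵥ pB + (n ⬝ᵥ pB) • a := by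
    have : (R * B) *ᵥ pB = A *ᵥ pB + (n ⬝ᵥ pB) • a := by
      rw [hRB, add_mulVec, vecMulVec_mulVec']
    rw [← this, ← mulVec_mulVec, hpB, mulVec_smul]
  have hAinvRpB : α • (A⁻¹ *ᵥ (R *ᵥ pB)) = pB + (n ⬝ᵥ pB) • (A⁻¹ *ᵥ a) := by
    have := congrArg (fun v => A⁻¹ *ᵥ v) hRpB
    simpa [mulVec_add, mulVec_smul, mulVec_mulVec, hAinvA] using this
  -- move A⁻¹ across the dot product
  have hswap : ∀ x : V3, x ⬝ᵥ (A⁻¹ *ᵥ n) = (A⁻¹ *ᵥ x) ⬝ᵥ n := by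
    intro x
    rw [dotProduct_mulVec, ← mulVec_transpose, hAinvsymm]
  have main : α * ((R *ᵥ pB - pA) ⬝ᵥ (A⁻¹ *ᵥ n)) = (pB - pA) ⬝ᵥ n := by
    rw [hswap]
    have : α • (A⁻¹ *ᵥ (R *ᵥ pB - pA)) = pB - pA + (n ⬝ᵥ pB) • (A⁻¹ *ᵥ a) := by
      rw [mulVec_sub, smul_sub, hAinvRpB, hAinvpA]
      abel
    calc α * ((A⁻¹ *ᵥ (R *ᵥ pB - pA)) ⬝ᵥ n)
        = (α • (A⁻¹ *ᵥ (R *ᵥ pB - pA))) ⬝ᵥ n := by rw [smul_dotProduct, smul_eq_mul]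
      _ = (pB - pA) ⬝ᵥ n + (n ⬝ᵥ pB) • ((A⁻¹ *ᵥ a) ⬝ᵥ n) := by
          rw [this, add_dotProduct, smul_dotProduct]
      _ = (pB - pA) ⬝ᵥ n := by
          rw [dotProduct_comm (A⁻¹ *ᵥ a) n, key, smul_zero, add_zero]
  constructor
  · intro h
    rw [← main, h, mul_zero]
  · intro h
    have : α * ((R *ᵥ pB - pA) ⬝ᵥ (A⁻¹ *ᵥ n)) = 0 := by rw [main, h]
    exact (mul_eq_zero.mp this).resolve_left hα
end
end

section
/- Let p̂₅ = (−e₁+e₂)/√2, p̂₆ = (e₁+e₂)/√2, p̂₃ = (−e₁+e₃)/√2, p̂₄ = (e₁+e₃)/√2, and let n₁ = e₁, n₃ = −e₁, and n₂, n₄ unit vectors satisfying n₄·e₃ = n₂·e₂, n₄·e₂ = n₂·e₃, n₂·e₃ = −n₂·e₂, and n₂·e₁ = n₄·e₁ = 0. Then with the sign choices p₅ = p̂₅, p₆ = −p̂₆, p₃ = p̂₃, p₄ = −p̂₄, all four interface jump conditions hold: (p₅ − p₆)·n₁ = 0, (p₆ − p₃)·n₂ = 0, (p₃ − p₄)·n₃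 = 0, (p₄ − p₅)·n₄ = 0. -/
open Matrix

noncomputable section

theorem crossing_twin_pole_free_interfaces
    (e₁ e₂ e₃ : V3) (he₁ : e₁ = ![1, 0, 0]) (he₂ : e₂ = ![0, 1, 0]) (he₃ : e₃ = ![0, 0, 1])
    (phat₅ phat₆ phat₃ phat₄ : V3)
    (hp₅ : phat₅ = (Real.sqrt 2)⁻¹ • (-e₁ + e₂))
    (hp₆ : phat₆ = (Real.sqrt 2)⁻¹ • (e₁ + e₂))
    (hp₃ : phat₃ = (Real.sqrt 2)⁻¹ • (-e₁ + e₃))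
    (hp₄ : phat₄ = (Real.sqrt 2)⁻¹ • (e₁ + e₃))
    (n₁ n₂ n₃ n₄ : V3) (hn₁ : n₁ = e₁) (hn₃ : n₃ = -e₁)
    (hn₂unit : n₂ ⬝ᵥ n₂ = 1) (hn₄unit : n₄ ⬝ᵥ n₄ = 1)
    (h42 : n₄ ⬝ᵥ e₃ = n₂ ⬝ᵥ e₂) (h42' : n₄ ⬝ᵥ e₂ = n₂ ⬝ᵥ e₃)
    (h2 : n₂ ⬝ᵥ e₃ = -(n₂ ⬝ᵥ e₂))
    (h2e₁ : n₂ ⬝ᵥ e₁ = 0) (h4e₁ : n₄ ⬝ᵥ e₁ = 0) :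
    let p₅ := phat₅
    let p₆ := -phat₆
    let p₃ := phat₃
    let p₄ := -phat₄
    (p₅ - p₆) ⬝ᵥ n₁ = 0 ∧ (p₆ - p₃) ⬝ᵥ n₂ = 0 ∧
    (p₃ - p₄) ⬝ᵥ n₃ = 0 ∧ (p₄ - p₅) ⬝ᵥ n₄ = 0 := by
  subst he₁ he₂ he₃ hp₅ hp₆ hp₃ hp₄ hn₁ hn₃
  simp only [dotProduct, Fin.sum_univ_three, Matrix.cons_val_zero, Matrix.cons_val_one,
    Matrix.head_cons, Matrix.cons_val_two, Matrix.tail_cons, mul_one, mul_zero, add_zero,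
    zero_add, mul_comm] at h42 h42' h2 h2e₁ h4e₁ ⊢
  ring_nf at h42 h42' h2 h2e₁ h4e₁
  simp only [Pi.sub_apply, Pi.neg_apply, Pi.add_apply, Pi.smul_apply, Matrix.cons_val_zero,
    Matrix.cons_val_one, Matrix.head_cons, Matrix.cons_val_two, Matrix.tail_cons, smul_eq_mul]
  refine ⟨by ring, by linear_combination (-(Real.sqrt 2)⁻¹) * h2, by ring,
    by linear_combination (-(Real.sqrt 2)⁻¹) * h42' + (-(Real.sqrt 2)⁻¹) * h42 +
      (-(Real.sqrt 2)⁻¹) * h2⟩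
end
end
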